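/- For the greedy choice function with transferable quotas, the coalition condition C(f,p,d) ⊆ Ch_d(μ(d) ∪ C(f,p,d)) holds if and only if for every grade group G_d, the number of children of μ(d) in grade group G_d with higher priority than at least one applicant in C(f,p,d,G_d) plus |C(f,p,d,G_d)| is at most Q(d,G_d). -/

import Mathlib

/-- Greedy choice: process children in priority order (the list `order`),
    accept a child from the applicant set iff its grade group's accepted
    count is still below the group's transferable quota. -/
def greedyAux {Child ι : Type} [DecidableEq Child] [DecidableEq ι]
    (group : Child → ι) (quota : ι → ℕ) :
    List Child → Finset Child → Finset Child → Finset Child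
  | [], _, acc => acc
  | c :: rest, C', acc =>
      if c ∈ C' ∧ (acc.filter (fun x => group x = group c)).card < quota (group c)
      then greedyAux group quota rest C' (insert c acc)
      else greedyAux group quota rest C' acc

/-- The choice function `Ch_d` of a daycare with priority list `order`,
    grade-group map `group` and transferable quotas `quota`. -/
def choice {Child ι : Type} [DecidableEq Child] [DecidableEq ι]
    (group : Child → ι) (quota : ι → ℕ) (order : List Child) (C' : Finset Child) :
    Finset Child :=
  greedyAux group quota order C' ∅

section Aux

variable {Child ι : Type} [DecidableEq Child] [DecidableEq ι]
    (group : Child → ι) (Q : ι → ℕ)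

lemma subset_greedyAux (l : List Child) (C' acc : Finset Child) :
    acc ⊆ greedyAux group Q l C' acc := by
  induction l generalizing acc with
  | nil => simp [greedyAux]
  | cons c rest ih =>
    rw [greedyAux]
    split
    · exact (Finset.subset_insert _ _).trans (ih _)
    · exact ih _

lemma greedyAux_subset (l : List Child) (C' acc : Finset Child) :
    greedyAux group Q l C' acc ⊆ acc ∪ l.toFinset := by
  induction l generalizing acc with
  | nil => simp [greedyAux]
  | cons c rest ih =>
    rw [greedyAux]
    intro x hx
    simp only [List.toFinset_cons, Finset.mem_union, Finset.mem_insert]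
    split at hx
    · rcases Finset.mem_union.1 (ih (insert c acc) hx) with h | h
      · rcases Finset.mem_insert.1 h with h | h
        · exact Or.inr (Or.inl h)
        · exact Or.inl h
      · exact Or.inr (Or.inr h)
    · rcases Finset.mem_union.1 (ih acc hx) with h | h
      · exact Or.inl h
      · exact Or.inr (Or.inr h)

lemma mem_take_iff_indexOf {l : List Child} {c : Child} {n : ℕ} :
    c ∈ l.take n ↔ c ∈ l ∧ l.idxOf c < n := by
  induction l generalizing n with
  | nil => simp
  | cons x xs ih =>
    cases n with
    | zero => simp
    | succ m =>
      simp only [List.take_succ_cons, List.mem_cons]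
      by_cases hx : c = x
      · subst hx; simp [List.idxOf_cons_self]
      · rw [List.idxOf_cons_ne _ (Ne.symm hx)]
        simp [hx, ih, Nat.succ_lt_succ_iff]

lemma mem_greedyAux (l : List Child) (hl : l.Nodup) (C' acc : Finset Child)
    (hd : ∀ x ∈ l, x ∉ acc) (a : Child) (ha : a ∈ l) (haC : a ∈ C') :
    a ∈ greedyAux group Q l C' acc ↔
      (acc.filter (fun x => group x = group a)).card
        + (l.take (l.idxOf a)).countP
            (fun c => decide (c ∈ C' ∧ group c = group a)) < Q (group a) := by
  induction l generalizing acc with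
  | nil => simp at ha
  | cons c rest ih =>
    have hcrest : c ∉ rest := (List.nodup_cons.1 hl).1
    have hrest : rest.Nodup := (List.nodup_cons.1 hl).2
    rw [greedyAux]
    by_cases hca : c = a
    · subst hca
      rw [List.idxOf_cons_self]
      simp only [List.take_zero, List.countP_nil, Nat.add_zero]
      by_cases hcond : c ∈ C' ∧ (acc.filter (fun x => group x = group c)).card < Q (group c)
      · rw [if_pos hcond]
        exact iff_of_true
          (subset_greedyAux group Q rest C' _ (Finset.mem_insert_self _ _)) hcond.2
      · rw [if_neg hcond]
        constructor
        · intro hmem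
          rcases Finset.mem_union.1 (greedyAux_subset group Q rest C' acc hmem) with h | h
          · exact absurd h (hd c (List.mem_cons_self))
          · exact absurd (List.mem_toFinset.1 h) hcrest
        · intro h
          exact absurd ⟨haC, h⟩ hcond
    · have harest : a ∈ rest := by
        rcases List.mem_cons.1 ha with h | h
        · exact absurd h.symm hca
        · exact h
      rw [List.idxOf_cons_ne _ hca]
      rw [show Nat.succ (rest.idxOf a) = rest.idxOf a + 1 from rfl]
      rw [List.take_succ_cons, List.countP_cons]
      by_cases hcond : c ∈ C' ∧ (acc.filter (fun x => group x = group c)).card < Q (group c)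
      · rw [if_pos hcond]
        have hcacc : c ∉ acc := hd c (List.mem_cons_self)
        have hd' : ∀ x ∈ rest, x ∉ insert c acc := by
          intro x hx
          simp only [Finset.mem_insert, not_or]
          exact ⟨fun h => hcrest (h ▸ hx), hd x (List.mem_cons_of_mem _ hx)⟩
        rw [ih hrest _ hd' harest]
        by_cases hg : group c = group a
        · have heq : (insert c acc).filter (fun x => group x = group a)
              = insert c (acc.filter (fun x => group x = group a)) := by
            rw [Finset.filter_insert, if_pos hg]
          rw [heq, Finset.card_insert_of_notMem (fun h => hcacc (Finset.mem_filter.1 h).1)]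
          have hone : (if c ∈ C' ∧ group c = group a then 1 else 0) = 1 := by
            simp [hcond.1, hg]
          simp only [decide_eq_true_eq, hone]
          omega
        · have h1 : (insert c acc).filter (fun x => group x = group a)
              = acc.filter (fun x => group x = group a) := by
            rw [Finset.filter_insert, if_neg hg]
          have h2 : (if c ∈ C' ∧ group c = group a then 1 else 0) = 0 := by
            simp [hg]
          simp only [decide_eq_true_eq, h1, h2]
          omega
      · rw [if_neg hcond]
        have hd' : ∀ x ∈ rest, x ∉ acc := fun x hx => hd x (List.mem_cons_of_mem _ hx)
        rw [ih hrest _ hd' harest]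
        by_cases hc : c ∈ C' ∧ group c = group a
        · have hQ : Q (group a) ≤ (acc.filter (fun x => group x = group a)).card := by
            rw [← hc.2]
            exact Nat.le_of_not_lt (fun h => hcond ⟨hc.1, h⟩)
          have h2 : (if c ∈ C' ∧ group c = group a then 1 else 0) = 1 := by simp [hc]
          simp only [decide_eq_true_eq, h2]
          omega
        · have h2 : (if c ∈ C' ∧ group c = group a then 1 else 0) = 0 := by simp [hc]
          simp only [decide_eq_true_eq, h2]
          omega

lemma mem_choice (order : List Child) (horder : order.Nodup) (hmem : ∀ c : Child, c ∈ order)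
    (C' : Finset Child) (a : Child) (haC : a ∈ C') :
    a ∈ choice group Q order C' ↔
      (C'.filter (fun c => group c = group a ∧ order.idxOf c < order.idxOf a)).card
        < Q (group a) := by
  rw [choice, mem_greedyAux group Q order horder C' ∅ (by simp) a (hmem a) haC]
  simp only [Finset.filter_empty, Finset.card_empty, Nat.zero_add]
  have hnd : (order.take (order.idxOf a)).Nodup := horder.sublist (List.take_sublist _ _)
  have hkey : (order.take (order.idxOf a)).countP
        (fun c => decide (c ∈ C' ∧ group c = group a))
      = (C'.filter (fun c => group c = group a ∧ order.idxOf c < order.idxOf a)).card := by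
    rw [List.countP_eq_length_filter, ← List.toFinset_card_of_nodup (hnd.filter _),
      List.toFinset_filter]
    congr 1
    ext x
    simp only [Finset.mem_filter, List.mem_toFinset, mem_take_iff_indexOf, decide_eq_true_eq]
    constructor
    · rintro ⟨⟨_, hlt⟩, hxC, hg⟩
      exact ⟨hxC, hg, hlt⟩
    · rintro ⟨hxC, hg, hlt⟩
      exact ⟨⟨hmem x, hlt⟩, hxC, hg⟩
  rw [hkey]

end Aux

/-- for the greedy choice function with transferable quotas, the coalition
    condition `C(f,p,d) ⊆ Ch_d(μ(d) ∪ C(f,p,d))` holds iff for every grade group `i`,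
    the number of children of `μ(d)` in grade group `i` that have higher priority than
    at least one applicant of grade group `i`, plus the number of applicants in group `i`,
    is at most the transferable quota `Q i`. -/
theorem coalition_condition_iff_counting
    {Child ι : Type} [DecidableEq Child] [DecidableEq ι]
    (order : List Child) (horder : order.Nodup) (hmem : ∀ c : Child, c ∈ order)
    (group : Child → ι) (Q : ι → ℕ)
    (μd A : Finset Child)
    (hdisj : Disjoint μd A)
    (hcap : ∀ i, (μd.filter (fun c => group c = i)).card ≤ Q i) :
    (A ⊆ choice group Q order (μd ∪ A)
    ↔
    ∀ i, (μd.filter (fun c => group c = i ∧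
            ∃ a ∈ A, group a = i ∧ order.idxOf c < order.idxOf a)).card
          + (A.filter (fun a => group a = i)).card ≤ Q i) := by
  have hposinj : ∀ x y : Child, order.idxOf x = order.idxOf y → x = y := by
    intro x y h
    exact (List.idxOf_inj (hmem x)).1 h
  constructor
  · intro hsub i
    set M := μd.filter (fun c => group c = i ∧
        ∃ a ∈ A, group a = i ∧ order.idxOf c < order.idxOf a) with hM
    set N := A.filter (fun a => group a = i) with hN
    by_cases hNe : N.Nonempty
    · obtain ⟨a, haN, hamax⟩ := N.exists_max_image (fun c => order.idxOf c) hNe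
      have haA : a ∈ A := (Finset.mem_filter.1 haN).1
      have hag : group a = i := (Finset.mem_filter.1 haN).2
      have hchar := (mem_choice group Q order horder hmem (μd ∪ A) a
        (Finset.mem_union_right _ haA)).1 (hsub haA)
      rw [hag] at hchar
      set S := (μd ∪ A).filter
        (fun c => group c = i ∧ order.idxOf c < order.idxOf a) with hS
      have hsubset : M ∪ N.erase a ⊆ S := by
        intro x hx
        rcases Finset.mem_union.1 hx with hx | hx
        · rcases Finset.mem_filter.1 hx with ⟨hxμ, hxg, b, hbA, hbg, hlt⟩
          refine Finset.mem_filter.2 ⟨Finset.mem_union_left _ hxμ, hxg, ?_⟩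
          have : order.idxOf b ≤ order.idxOf a :=
            hamax b (Finset.mem_filter.2 ⟨hbA, hbg⟩)
          omega
        · have hxa : x ≠ a := Finset.ne_of_mem_erase hx
          have hxN : x ∈ N := Finset.mem_of_mem_erase hx
          rcases Finset.mem_filter.1 hxN with ⟨hxA, hxg⟩
          refine Finset.mem_filter.2 ⟨Finset.mem_union_right _ hxA, hxg, ?_⟩
          have h1 : order.idxOf x ≤ order.idxOf a := hamax x hxN
          have h2 : order.idxOf x ≠ order.idxOf a := fun h => hxa (hposinj _ _ h)
          omega
      have hdisjMN : Disjoint M (N.erase a) := by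
        apply Finset.disjoint_left.2
        intro x hxM hxN
        exact (Finset.disjoint_left.1 hdisj) (Finset.mem_filter.1 hxM).1
          (Finset.mem_filter.1 (Finset.mem_of_mem_erase hxN)).1
      have hcardU : M.card + (N.erase a).card ≤ S.card := by
        rw [← Finset.card_union_of_disjoint hdisjMN]
        exact Finset.card_le_card hsubset
      have herase : (N.erase a).card = N.card - 1 := Finset.card_erase_of_mem haN
      have hNpos : 1 ≤ N.card := Finset.card_pos.2 ⟨a, haN⟩
      omega
    · have hN0 : N.card = 0 := by
        rw [Finset.not_nonempty_iff_eq_empty] at hNe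
        simp [hNe]
      have hM0 : M.card = 0 := by
        rw [Finset.card_eq_zero, Finset.filter_eq_empty_iff]
        rintro c _ ⟨_, b, hbA, hbg, _⟩
        rw [Finset.not_nonempty_iff_eq_empty] at hNe
        have : b ∈ N := Finset.mem_filter.2 ⟨hbA, hbg⟩
        simp [hNe] at this
      rw [hM0, hN0]
      exact Nat.zero_le _
  · intro hcount a haA
    rw [mem_choice group Q order horder hmem (μd ∪ A) a (Finset.mem_union_right _ haA)]
    rw [Finset.filter_union]
    rw [Finset.card_union_of_disjoint (Finset.disjoint_filter_filter hdisj)]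
    have h1 : μd.filter (fun c => group c = group a ∧ order.idxOf c < order.idxOf a)
        ⊆ μd.filter (fun c => group c = group a ∧
            ∃ b ∈ A, group b = group a ∧ order.idxOf c < order.idxOf b) := by
      intro x hx
      rcases Finset.mem_filter.1 hx with ⟨hxμ, hxg, hlt⟩
      exact Finset.mem_filter.2 ⟨hxμ, hxg, a, haA, rfl, hlt⟩
    have h2 : A.filter (fun c => group c = group a ∧ order.idxOf c < order.idxOf a)
        ⊆ (A.filter (fun c => group c = group a)).erase a := by
      intro x hx
      rcases Finset.mem_filter.1 hx with ⟨hxA, hxg, hlt⟩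
      refine Finset.mem_erase.2 ⟨fun h => by simp [h] at hlt, Finset.mem_filter.2 ⟨hxA, hxg⟩⟩
    have hc1 := Finset.card_le_card h1
    have hc2 := Finset.card_le_card h2
    have haN : a ∈ A.filter (fun c => group c = group a) :=
      Finset.mem_filter.2 ⟨haA, rfl⟩
    have hcard : 1 ≤ (A.filter (fun c => group c = group a)).card :=
      Finset.card_pos.2 ⟨a, haN⟩
    have herase : ((A.filter (fun c => group c = group a)).erase a).card
        = (A.filter (fun c => group c = group a)).card - 1 :=
      Finset.card_erase_of_mem haN
    have hcnt := hcount (group a)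
    omega
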